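/- arXiv:2103.14897 — 2 statements merged into one kernel-verified Lean document; each statement's English description precedes it below -/
import Mathlib

section
/- Let A₁, A₂ ∈ ℝ^{d×d} be invertible and suppose the lattices R₁, R₂ are incommensurate. Then the plane waves e^{i(G₁ₘ+G₂ₙ)·x}, indexed by (m,n) ∈ ℤ^d × ℤ^d, are orthonormal with respect to the averaged inner product: lim_{R→∞} (1/|B_R|) ∫_{B_R} e^{-i(G₁ₘ+G₂ₙ)·x} e^{i(G₁ₘ'+G₂ₙ')·x} dx = δ_{mm'} δ_{nn'}. -/
open Matrix Real MeasureTheory Filter Classical Metric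
open scoped RealInnerProductSpace

lemma osc {d : ℕ} (k : EuclideanSpace ℝ (Fin d)) (hk : k ≠ 0) :
    Tendsto (fun R : ℝ => ((volume (Metric.ball (0 : EuclideanSpace ℝ (Fin d)) R)).toReal)⁻¹ •
      ∫ x in Metric.ball (0 : EuclideanSpace ℝ (Fin d)) R,
        Complex.exp (Complex.I * (⟪k, x⟫ : ℝ))) atTop (nhds 0) := by
  haveI : Nontrivial (EuclideanSpace ℝ (Fin d)) := ⟨k, 0, hk⟩
  set f : EuclideanSpace ℝ (Fin d) → ℂ := fun x => Complex.exp (Complex.I * (⟪k, x⟫ : ℝ)) with hf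
  have hfc : Continuous f := by
    apply Complex.continuous_exp.comp
    exact (continuous_const.mul (Complex.continuous_ofReal.comp (continuous_const.inner continuous_id)))
  have hfnorm : ∀ x : EuclideanSpace ℝ (Fin d), ‖f x‖ = 1 := by
    intro x
    simp [hf, Complex.norm_exp]
  have hint : ∀ (z : EuclideanSpace ℝ (Fin d)) (r : ℝ), IntegrableOn f (ball z r) := by
    intro z r
    exact ((hfc.locallyIntegrable).integrableOn_isCompact (isCompact_closedBall z r)).mono_set
      ball_subset_closedBall
  set h : EuclideanSpace ℝ (Fin d) := (π / ‖k‖ ^ 2) • k with hh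
  set a : ℝ := ‖h‖ with ha
  have ha0 : 0 ≤ a := norm_nonneg _
  have hfh : ∀ x : EuclideanSpace ℝ (Fin d), f (x + h) = - f x := by
    intro x
    have hkk : ⟪k, h⟫ = π := by
      rw [hh, real_inner_smul_right, real_inner_self_eq_norm_sq]
      rw [div_mul_cancel₀]
      exact pow_ne_zero 2 (norm_ne_zero_iff.2 hk)
    have : ⟪k, x + h⟫ = ⟪k, x⟫ + π := by rw [inner_add_right, hkk]
    rw [hf]; simp only [this]
    push_cast
    rw [mul_add, Complex.exp_add, mul_comm Complex.I (π:ℂ), Complex.exp_pi_mul_I]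
    ring
  have key : ∀ R : ℝ, ∫ x in ball h R, f x = - ∫ x in ball (0:EuclideanSpace ℝ (Fin d)) R, f x := by
    intro R
    have himg : ball h R = (fun x : EuclideanSpace ℝ (Fin d) => x + h) '' ball (0:EuclideanSpace ℝ (Fin d)) R := by
      ext x
      simp only [Set.mem_image, mem_ball, dist_eq_norm]
      constructor
      · intro hx; exact ⟨x - h, by simpa using hx, by abel⟩
      · rintro ⟨y, hy, rfl⟩; simpa using hy
    rw [himg, (measurePreserving_add_right volume h).setIntegral_image_emb
      (measurableEmbedding_addRight h) f _]
    simp_rw [hfh]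
    exact integral_neg f
  set c : ℝ := (volume (ball (0 : EuclideanSpace ℝ (Fin d)) 1)).toReal with hc
  have hcpos : 0 < c := by
    rw [hc]
    exact ENNReal.toReal_pos (measure_ball_pos volume _ one_pos).ne' measure_ball_lt_top.ne
  have hvol : ∀ r : ℝ, 0 ≤ r → (volume (ball (0 : EuclideanSpace ℝ (Fin d)) r)).toReal = r ^ d * c := by
    intro r hr
    rw [Measure.addHaar_ball volume _ hr, ENNReal.toReal_mul,
      ENNReal.toReal_ofReal (pow_nonneg hr _), finrank_euclideanSpace_fin]
  -- the annulus bound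
  have hbound : ∀ R : ℝ, a + 1 ≤ R →
      ‖((volume (ball (0:EuclideanSpace ℝ (Fin d)) R)).toReal)⁻¹ • ∫ x in ball (0:EuclideanSpace ℝ (Fin d)) R, f x‖
        ≤ ((R + a) ^ d - (R - a) ^ d) / R ^ d := by
    intro R hR
    have hR0 : (0:ℝ) < R := by linarith
    have hRa : (0:ℝ) ≤ R - a := by linarith
    set s := ball (0:EuclideanSpace ℝ (Fin d)) R
    set t := ball h R
    have hts : t ⊆ ball (0:EuclideanSpace ℝ (Fin d)) (R + a) := by
      intro x hx
      simp only [t, mem_ball, dist_eq_norm] at hx ⊢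
      calc ‖x - 0‖ = ‖(x - h) + h‖ := by rw [sub_zero, sub_add_cancel]
        _ ≤ ‖x - h‖ + ‖h‖ := norm_add_le _ _
        _ < R + a := by linarith [hx]
    have hst : ball (0:EuclideanSpace ℝ (Fin d)) (R - a) ⊆ t := by
      intro x hx
      simp only [t, mem_ball, dist_eq_norm] at hx ⊢
      calc ‖x - h‖ ≤ ‖x - 0‖ + ‖h‖ := by simpa using norm_sub_le_norm_sub_add_norm_sub x 0 h
        _ < R := by linarith [hx]
    have hann : s \ t ⊆ ball (0:EuclideanSpace ℝ (Fin d)) (R+a) \ ball 0 (R-a) := by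
      rintro x ⟨hxs, hxt⟩
      exact ⟨ball_subset_ball (by linarith) hxs, fun hx => hxt (hst hx)⟩
    have hann' : t \ s ⊆ ball (0:EuclideanSpace ℝ (Fin d)) (R+a) \ ball 0 (R-a) := by
      rintro x ⟨hxt, hxs⟩
      exact ⟨hts hxt, fun hx => hxs (ball_subset_ball (by linarith) hx)⟩
    have hannvol : (volume (ball (0:EuclideanSpace ℝ (Fin d)) (R+a) \ ball 0 (R-a))).toReal
        = (R+a)^d * c - (R-a)^d * c := by
      rw [measure_diff (ball_subset_ball (by linarith)) measurableSet_ball.nullMeasurableSet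
        measure_ball_lt_top.ne,
        ENNReal.toReal_sub_of_le (measure_mono (ball_subset_ball (by linarith)))
          measure_ball_lt_top.ne, hvol _ (by linarith), hvol _ hRa]
    have est : ∀ u : Set (EuclideanSpace ℝ (Fin d)),
        u ⊆ ball (0:EuclideanSpace ℝ (Fin d)) (R+a) \ ball 0 (R-a) →
        ‖∫ x in u, f x‖ ≤ (R+a)^d * c - (R-a)^d * c := by
      intro u hu
      have hufin : volume u < ⊤ :=
        lt_of_le_of_lt (measure_mono (hu.trans Set.diff_subset)) measure_ball_lt_top
      calc ‖∫ x in u, f x‖ ≤ 1 * (volume u).toReal :=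
            norm_setIntegral_le_of_norm_le_const hufin (fun x _ => (hfnorm x).le)
        _ ≤ (R+a)^d * c - (R-a)^d * c := by
            rw [one_mul, ← hannvol]
            exact ENNReal.toReal_mono
              ((measure_mono Set.diff_subset).trans_lt measure_ball_lt_top).ne (measure_mono hu)
    have hsplit_s := integral_inter_add_diff (μ := volume) (s := s) (t := t)
      measurableSet_ball (hint _ _)
    have hsplit_t := integral_inter_add_diff (μ := volume) (s := t) (t := s)
      measurableSet_ball (hint _ _)
    have h2I : (2:ℂ) * ∫ x in s, f x = (∫ x in s \ t, f x) - ∫ x in t \ s, f x := by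
      have e1 : (∫ x in s, f x) - (∫ x in t, f x)
          = (∫ x in s \ t, f x) - (∫ x in t \ s, f x) := by
        rw [← hsplit_s, ← hsplit_t, Set.inter_comm]; ring
      rw [key R] at e1
      rw [← e1]; ring
    have hInorm : ‖∫ x in s, f x‖ ≤ (R+a)^d * c - (R-a)^d * c := by
      have h2 : ‖(2:ℂ) * ∫ x in s, f x‖ ≤ 2 * ((R+a)^d * c - (R-a)^d * c) := by
        rw [h2I]
        calc ‖(∫ x in s \ t, f x) - ∫ x in t \ s, f x‖
            ≤ ‖∫ x in s \ t, f x‖ + ‖∫ x in t \ s, f x‖ := norm_sub_le _ _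
          _ ≤ 2 * ((R+a)^d * c - (R-a)^d * c) := by
              have := est _ hann
              have := est _ hann'
              linarith
      rw [norm_mul] at h2
      simp only [Complex.norm_ofNat] at h2
      linarith
    have hvs : (volume s).toReal = R ^ d * c := hvol R hR0.le
    rw [norm_smul, Real.norm_eq_abs, abs_of_nonneg (by positivity), hvs]
    have hRd : (0:ℝ) < R ^ d := by positivity
    calc (R ^ d * c)⁻¹ * ‖∫ x in s, f x‖
        ≤ (R ^ d * c)⁻¹ * ((R+a)^d * c - (R-a)^d * c) := by
          apply mul_le_mul_of_nonneg_left hInorm (by positivity)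
      _ = ((R + a) ^ d - (R - a) ^ d) / R ^ d := by
          field_simp
  apply squeeze_zero_norm' (a := fun R : ℝ => ((R + a) ^ d - (R - a) ^ d) / R ^ d)
  · filter_upwards [eventually_ge_atTop (a+1)] with R hR using hbound R hR
  · have h1 : Tendsto (fun R : ℝ => a / R) atTop (nhds 0) :=
      tendsto_const_nhds.div_atTop tendsto_id
    have h2 : Tendsto (fun x : ℝ => (1+x)^d - (1-x)^d) (nhds 0) (nhds 0) := by
      have hcont : Continuous fun x : ℝ => (1+x)^d - (1-x)^d :=
        ((continuous_const.add continuous_id').pow d).sub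
          ((continuous_const.sub continuous_id').pow d)
      have := hcont.tendsto 0
      simpa using this
    apply (h2.comp h1).congr'
    filter_upwards [eventually_ge_atTop 1] with R hR
    have hRne : R ≠ 0 := by linarith
    have e1 : 1 + a / R = (R+a)/R := by field_simp
    have e2 : 1 - a / R = (R-a)/R := by field_simp
    simp only [Function.comp]
    rw [e1, e2, div_pow, div_pow, div_sub_div_same]

section Main

variable {d : ℕ}

/-- linearity helper -/
lemma latt_add (B : Matrix (Fin d) (Fin d) ℝ) (p q : Fin d → ℤ) :
    (2 * π) • (B *ᵥ fun i => ((p i : ℝ))) + (2 * π) • (B *ᵥ fun i => ((q i : ℝ)))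
      = (2 * π) • (B *ᵥ fun i => (((p + q) i : ℝ))) := by
  have hv : (fun i => ((p i : ℝ))) + (fun i => ((q i : ℝ))) = fun i => (((p + q) i : ℝ)) := by
    funext i
    simp only [Pi.add_apply]
    push_cast
    ring
  rw [← smul_add, ← Matrix.mulVec_add, hv]

lemma latt_sub (B : Matrix (Fin d) (Fin d) ℝ) (p q : Fin d → ℤ) :
    (2 * π) • (B *ᵥ fun i => ((p i : ℝ))) - (2 * π) • (B *ᵥ fun i => ((q i : ℝ)))
      = (2 * π) • (B *ᵥ fun i => (((p - q) i : ℝ))) := by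
  have hv : (fun i => ((p i : ℝ))) - (fun i => ((q i : ℝ))) = fun i => (((p - q) i : ℝ)) := by
    funext i
    simp only [Pi.sub_apply]
    push_cast
    ring
  rw [← smul_sub, ← Matrix.mulVec_sub, hv]

lemma inv_cancel {A : Matrix (Fin d) (Fin d) ℝ} (hA : IsUnit A.det) (u : Fin d → ℤ)
    (hu : (2 * π) • ((A⁻¹)ᵀ *ᵥ fun i => ((u i : ℝ))) = 0) : u = 0 := by
  have h2π : (2 * π : ℝ) ≠ 0 := by positivity
  have h1 : ((A⁻¹)ᵀ *ᵥ fun i => ((u i : ℝ))) = 0 := by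
    rcases smul_eq_zero.1 hu with h | h
    · exact absurd h h2π
    · exact h
  have h2 : Aᵀ *ᵥ ((A⁻¹)ᵀ *ᵥ fun i => ((u i : ℝ))) = (fun i => ((u i : ℝ))) := by
    rw [Matrix.mulVec_mulVec, ← Matrix.transpose_mul, Matrix.nonsing_inv_mul A hA,
      Matrix.transpose_one, Matrix.one_mulVec]
  rw [h1, Matrix.mulVec_zero] at h2
  funext i
  have := congrFun h2 i
  simp only [Pi.zero_apply] at this ⊢
  exact_mod_cast this.symm

end Main

lemma incomm_eq {d : ℕ} {A₁ A₂ : Matrix (Fin d) (Fin d) ℝ}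
    (h₁ : IsUnit A₁.det) (h₂ : IsUnit A₂.det)
    {L₁ L₂ : Set (Fin d → ℝ)}
    (hL₁ : L₁ = {v | ∃ n : Fin d → ℤ, v = (2 * π) • ((A₁⁻¹)ᵀ *ᵥ fun i => (n i : ℝ))})
    (hL₂ : L₂ = {v | ∃ n : Fin d → ℤ, v = (2 * π) • ((A₂⁻¹)ᵀ *ᵥ fun i => (n i : ℝ))})
    (hinc : ∀ γ : Fin d → ℝ, (fun v => γ + v) '' (L₁ ∪ L₂) = L₁ ∪ L₂ → γ = 0)
    (m n m' n' : Fin d → ℤ)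
    (heq : (2 * π) • ((A₁⁻¹)ᵀ *ᵥ fun i => (m i : ℝ)) + (2 * π) • ((A₂⁻¹)ᵀ *ᵥ fun i => (n i : ℝ))
      = (2 * π) • ((A₁⁻¹)ᵀ *ᵥ fun i => (m' i : ℝ)) + (2 * π) • ((A₂⁻¹)ᵀ *ᵥ fun i => (n' i : ℝ))) :
    m = m' ∧ n = n' := by
  set B₁ := (A₁⁻¹)ᵀ with hB₁
  set B₂ := (A₂⁻¹)ᵀ with hB₂
  set γ : Fin d → ℝ := (2 * π) • (B₁ *ᵥ fun i => (((m - m') i : ℝ))) with hγ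
  have hγ1 : γ = (2 * π) • (B₁ *ᵥ fun i => ((m i : ℝ)))
      - (2 * π) • (B₁ *ᵥ fun i => ((m' i : ℝ))) := (latt_sub B₁ m m').symm
  have hγ2 : γ = (2 * π) • (B₂ *ᵥ fun i => (((n' - n) i : ℝ))) := by
    rw [← latt_sub B₂ n' n, hγ1]
    linear_combination heq
  have himg : (fun v => γ + v) '' (L₁ ∪ L₂) = L₁ ∪ L₂ := by
    ext w
    simp only [Set.mem_image, Set.mem_union, hL₁, hL₂, Set.mem_setOf_eq]
    constructor
    · rintro ⟨v, (⟨p, rfl⟩ | ⟨p, rfl⟩), rfl⟩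
      · exact Or.inl ⟨m - m' + p, (latt_add B₁ (m - m') p).symm.symm⟩
      · refine Or.inr ⟨n' - n + p, ?_⟩
        rw [hγ2]
        exact latt_add B₂ (n' - n) p
    · rintro (⟨p, rfl⟩ | ⟨p, rfl⟩)
      · refine ⟨_, Or.inl ⟨p - (m - m'), rfl⟩, ?_⟩
        rw [hγ, latt_add B₁ (m - m') (p - (m - m')),
          show m - m' + (p - (m - m')) = p by abel]
      · refine ⟨_, Or.inr ⟨p - (n' - n), rfl⟩, ?_⟩
        rw [hγ2, latt_add B₂ (n' - n) (p - (n' - n)),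
          show n' - n + (p - (n' - n)) = p by abel]
  have hγ0 : γ = 0 := hinc γ himg
  constructor
  · have := inv_cancel h₁ (m - m') (by rw [← hγ, hγ0])
    funext i
    have := congrFun this i
    simp only [Pi.sub_apply, Pi.zero_apply, sub_eq_zero] at this
    exact this
  · have := inv_cancel h₂ (n' - n) (by rw [← hγ2, hγ0])
    funext i
    have := congrFun this i
    simp only [Pi.sub_apply, Pi.zero_apply, sub_eq_zero] at this
    exact this.symm

/-- Orthonormality of the plane waves `e^{i(G₁ₘ+G₂ₙ)·x}` for incommensurate lattices,
with respect to the averaged inner product. -/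
theorem planewaves_orthonormal {d : ℕ} (A₁ A₂ : Matrix (Fin d) (Fin d) ℝ)
    (h₁ : IsUnit A₁.det) (h₂ : IsUnit A₂.det)
    (G₁ G₂ : (Fin d → ℤ) → EuclideanSpace ℝ (Fin d))
    (hG₁ : ∀ m, G₁ m = (EuclideanSpace.equiv (Fin d) ℝ).symm
      ((2 * π) • ((A₁⁻¹)ᵀ *ᵥ fun i => (m i : ℝ))))
    (hG₂ : ∀ n, G₂ n = (EuclideanSpace.equiv (Fin d) ℝ).symm
      ((2 * π) • ((A₂⁻¹)ᵀ *ᵥ fun i => (n i : ℝ))))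
    (L₁ L₂ : Set (Fin d → ℝ))
    (hL₁ : L₁ = {v | ∃ n : Fin d → ℤ, v = (2 * π) • ((A₁⁻¹)ᵀ *ᵥ fun i => (n i : ℝ))})
    (hL₂ : L₂ = {v | ∃ n : Fin d → ℤ, v = (2 * π) • ((A₂⁻¹)ᵀ *ᵥ fun i => (n i : ℝ))})
    (hinc : ∀ γ : Fin d → ℝ, (fun v => γ + v) '' (L₁ ∪ L₂) = L₁ ∪ L₂ → γ = 0) :
    ∀ m n m' n' : Fin d → ℤ,
      Tendsto (fun R : ℝ =>
          ((volume (Metric.ball (0 : EuclideanSpace ℝ (Fin d)) R)).toReal)⁻¹ •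
            ∫ x in Metric.ball (0 : EuclideanSpace ℝ (Fin d)) R,
              Complex.exp (-Complex.I * (⟪G₁ m + G₂ n, x⟫ : ℝ)) *
                Complex.exp (Complex.I * (⟪G₁ m' + G₂ n', x⟫ : ℝ)))
        atTop (nhds (if m = m' ∧ n = n' then (1 : ℂ) else 0)) := by
  intro m n m' n'
  have himp : ∀ a b a' b' : Fin d → ℤ, G₁ a + G₂ b = G₁ a' + G₂ b' → a = a' ∧ b = b' := by
    intro a b a' b' heq
    rw [hG₁, hG₂, hG₁, hG₂, ← map_add, ← map_add] at heq
    exact incomm_eq h₁ h₂ hL₁ hL₂ hinc a b a' b'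
      ((EuclideanSpace.equiv (Fin d) ℝ).symm.injective heq)
  by_cases hcase : m = m' ∧ n = n'
  · obtain ⟨rfl, rfl⟩ := hcase
    rw [if_pos ⟨rfl, rfl⟩]
    refine Tendsto.congr' ?_ (tendsto_const_nhds (x := (1:ℂ)))
    filter_upwards [eventually_gt_atTop (0:ℝ)] with R hR
    have hpos : 0 < (volume (Metric.ball (0 : EuclideanSpace ℝ (Fin d)) R)).toReal :=
      ENNReal.toReal_pos (measure_ball_pos volume _ hR).ne' measure_ball_lt_top.ne
    have hone : ∀ x : EuclideanSpace ℝ (Fin d),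
        Complex.exp (-Complex.I * (⟪G₁ m + G₂ n, x⟫ : ℝ)) *
          Complex.exp (Complex.I * (⟪G₁ m + G₂ n, x⟫ : ℝ)) = 1 := by
      intro x
      rw [← Complex.exp_add, neg_mul, neg_add_cancel, Complex.exp_zero]
    simp only [hone, setIntegral_const, smul_smul, smul_eq_mul, mul_one,
      inv_mul_cancel₀ hpos.ne', one_smul]
    rw [Measure.real, inv_mul_cancel₀ hpos.ne', one_smul]
  · rw [if_neg hcase]
    have hne : (G₁ m' + G₂ n') - (G₁ m + G₂ n) ≠ 0 := by
      intro h0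
      obtain ⟨ha, hb⟩ := himp m' n' m n (sub_eq_zero.1 h0)
      exact hcase ⟨ha.symm, hb.symm⟩
    refine (osc _ hne).congr fun R => ?_
    congr 1
    refine setIntegral_congr_fun measurableSet_ball fun x _ => ?_
    rw [← Complex.exp_add]
    congr 1
    rw [inner_sub_left]
    push_cast
    ring
end

section
/- Let D, V₁, V₂ ∈ ℂ^{N×N} with D a real diagonal matrix and V₁, V₂ Hermitian, set H = D + V₁ + V₂, and let Φ(t) = e^{-itH}Φ⁰. Define the semi-implicit scheme Φ^{k+1} = (I + iτD)^{-1}(I - iτ(V₁+V₂))Φᵏ. Then there exist τ₀ > 0 and C_T > 0 such that ‖Φ(t_k) - Φᵏ‖₂ ≤ C_T τ for all 0 < τ < τ₀ and t_k = kτ ∈ [0,T]. -/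
open Matrix
open scoped Matrix.Norms.L2Operator

section ExpAux
set_option linter.unusedSectionVars false
variable {A : Type*} [NormedRing A] [NormedAlgebra ℂ A] [CompleteSpace A]

lemma aux_pow_norm_le (h1 : ‖(1:A)‖ ≤ 1) (x : A) : ∀ n : ℕ, ‖x ^ n‖ ≤ ‖x‖ ^ n := by
  intro n
  induction n with
  | zero => simpa using h1
  | succ n ih =>
    calc ‖x ^ (n+1)‖ = ‖x ^ n * x‖ := by rw [pow_succ]
    _ ≤ ‖x ^ n‖ * ‖x‖ := norm_mul_le _ _
    _ ≤ ‖x‖ ^ n * ‖x‖ := mul_le_mul_of_nonneg_right ih (norm_nonneg x)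
    _ = ‖x‖ ^ (n+1) := (pow_succ _ _).symm

lemma aux_term_norm_le (h1 : ‖(1:A)‖ ≤ 1) (x : A) (n : ℕ) :
    ‖(n.factorial : ℂ)⁻¹ • x ^ n‖ ≤ ‖x‖ ^ n / n.factorial := by
  rw [norm_smul, norm_inv]
  have h : ‖((n.factorial : ℕ) : ℂ)‖ = (n.factorial : ℝ) := Complex.norm_natCast _
  rw [h, div_eq_inv_mul]
  exact mul_le_mul_of_nonneg_left (aux_pow_norm_le h1 x n) (by positivity)

lemma aux_real_exp_hasSum (t : ℝ) :
    HasSum (fun n : ℕ => t ^ n / n.factorial) (Real.exp t) := by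
  have h := NormedSpace.expSeries_div_hasSum_exp t
  rwa [Real.exp_eq_exp_ℝ]

lemma aux_norm_exp_le (h1 : ‖(1:A)‖ ≤ 1) (x : A) :
    ‖NormedSpace.exp x‖ ≤ Real.exp ‖x‖ := by
  have e0 : NormedSpace.exp x = ∑' n : ℕ, (n.factorial : ℂ)⁻¹ • x ^ n :=
    congrFun (NormedSpace.exp_eq_tsum ℂ) x
  rw [e0]
  exact tsum_of_norm_bounded (aux_real_exp_hasSum ‖x‖) (aux_term_norm_le h1 x)

lemma aux_exp_remainder (h1 : ‖(1:A)‖ ≤ 1) (x : A) :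
    ‖NormedSpace.exp x - 1 - x‖ ≤ ‖x‖ ^ 2 * Real.exp ‖x‖ := by
  set f : ℕ → A := fun n => (n.factorial : ℂ)⁻¹ • x ^ n with hf
  have hs : Summable f := NormedSpace.expSeries_summable' x
  have hs1 : Summable fun n => f (n + 1) := (summable_nat_add_iff 1).mpr hs
  have key : NormedSpace.exp x - 1 - x = ∑' n : ℕ, f (n + 2) := by
    have e0 : NormedSpace.exp x = ∑' n, f n := congrFun (NormedSpace.exp_eq_tsum ℂ) x
    have e1 : ∑' n, f n = f 0 + ∑' n, f (n + 1) := Summable.tsum_eq_zero_add hs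
    have e2 : ∑' n, f (n + 1) = f 1 + ∑' n, f (n + 2) := by
      have h := Summable.tsum_eq_zero_add hs1
      simpa using h
    have hf0 : f 0 = 1 := by simp [hf]
    have hf1 : f 1 = x := by simp [hf]
    rw [e0, e1, e2, hf0, hf1]
    abel
  rw [key]
  have hb : ∀ n : ℕ, ‖f (n + 2)‖ ≤ ‖x‖ ^ 2 * (‖x‖ ^ n / n.factorial) := by
    intro n
    calc ‖f (n + 2)‖ ≤ ‖x‖ ^ (n + 2) / (n + 2).factorial := aux_term_norm_le h1 x (n + 2)
    _ ≤ ‖x‖ ^ (n + 2) / n.factorial := by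
        apply div_le_div_of_nonneg_left (by positivity) (by positivity)
        exact_mod_cast Nat.factorial_le (Nat.le_add_right n 2)
    _ = ‖x‖ ^ 2 * (‖x‖ ^ n / n.factorial) := by ring
  exact tsum_of_norm_bounded ((aux_real_exp_hasSum ‖x‖).mul_left (‖x‖ ^ 2)) hb

lemma aux_pow_sub_pow {A : Type*} [NormedRing A] (h1 : ‖(1:A)‖ ≤ 1) {a b : A} {M : ℝ}
    (hM : 1 ≤ M) (ha : ‖a‖ ≤ M) (hb : ‖b‖ ≤ M) (k : ℕ) :
    ‖a ^ k - b ^ k‖ ≤ k * M ^ k * ‖a - b‖ := by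
  have hM0 : 0 ≤ M := le_trans zero_le_one hM
  have hbp : ∀ m : ℕ, ‖b ^ m‖ ≤ M ^ m := by
    intro m
    induction m with
    | zero => simpa using le_trans h1 (le_refl 1)
    | succ m ih =>
      calc ‖b ^ (m+1)‖ = ‖b * b ^ m‖ := by rw [pow_succ']
      _ ≤ ‖b‖ * ‖b ^ m‖ := norm_mul_le _ _
      _ ≤ M * M ^ m := mul_le_mul hb ih (norm_nonneg _) hM0
      _ = M ^ (m+1) := (pow_succ' _ _).symm
  induction k with
  | zero => simp
  | succ k ih =>
    have hsplit : a ^ (k+1) - b ^ (k+1) = a * (a ^ k - b ^ k) + (a - b) * b ^ k := by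
      rw [mul_sub, sub_mul, ← pow_succ', ← pow_succ']
      abel
    have hMk : M ^ k ≤ M ^ (k+1) := by
      calc M ^ k = 1 * M ^ k := (one_mul _).symm
      _ ≤ M * M ^ k := mul_le_mul_of_nonneg_right hM (by positivity)
      _ = M ^ (k+1) := (pow_succ' _ _).symm
    calc ‖a ^ (k+1) - b ^ (k+1)‖ ≤ ‖a * (a ^ k - b ^ k)‖ + ‖(a - b) * b ^ k‖ := by
          rw [hsplit]; exact norm_add_le _ _
    _ ≤ ‖a‖ * ‖a ^ k - b ^ k‖ + ‖a - b‖ * ‖b ^ k‖ :=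
          add_le_add (norm_mul_le _ _) (norm_mul_le _ _)
    _ ≤ M * (k * M ^ k * ‖a - b‖) + ‖a - b‖ * M ^ k := by
          have h2 := hbp k
          have h3 : 0 ≤ ‖a - b‖ := norm_nonneg _
          have h4 : 0 ≤ ‖a ^ k - b ^ k‖ := norm_nonneg _
          nlinarith [mul_le_mul ha ih h4 hM0]
    _ = (k : ℝ) * M ^ (k+1) * ‖a - b‖ + M ^ k * ‖a - b‖ := by
          rw [pow_succ']; ring
    _ ≤ (k : ℝ) * M ^ (k+1) * ‖a - b‖ + M ^ (k+1) * ‖a - b‖ :=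
          add_le_add_right (mul_le_mul_of_nonneg_right hMk (norm_nonneg _)) _
    _ = (k+1 : ℕ) * M ^ (k+1) * ‖a - b‖ := by push_cast; ring

end ExpAux

set_option maxHeartbeats 1000000 in
lemma aux_norm_diagonal_le {N : ℕ} (v : Fin N → ℂ) {c : ℝ} (hc0 : 0 ≤ c)
    (hc : ∀ i, ‖v i‖ ≤ c) : ‖(Matrix.diagonal v : Matrix (Fin N) (Fin N) ℂ)‖ ≤ c := by
  rw [Matrix.l2_opNorm_def]
  refine ContinuousLinearMap.opNorm_le_bound _ hc0 (fun x => ?_)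
  set y : EuclideanSpace ℂ (Fin N) := (LinearEquiv.trans Matrix.toEuclideanLin
      LinearMap.toContinuousLinearMap (Matrix.diagonal v)) x with hy
  have happ : ∀ i, y i = v i * x i := by
    intro i
    simp [hy, Matrix.toEuclideanLin_apply, Matrix.mulVec_diagonal]
  show ‖y‖ ≤ c * ‖x‖
  rw [EuclideanSpace.norm_eq y, EuclideanSpace.norm_eq x]
  calc Real.sqrt (∑ i, ‖y i‖ ^ 2)
      ≤ Real.sqrt (∑ i, c ^ 2 * ‖x i‖ ^ 2) := by
        apply Real.sqrt_le_sqrt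
        apply Finset.sum_le_sum
        intro i _
        rw [happ i, norm_mul, mul_pow]
        exact mul_le_mul_of_nonneg_right (pow_le_pow_left₀ (norm_nonneg _) (hc i) 2)
          (by positivity)
    _ = Real.sqrt (c ^ 2 * ∑ i, ‖x i‖ ^ 2) := by rw [Finset.mul_sum]
    _ = c * Real.sqrt (∑ i, ‖x i‖ ^ 2) := by
        rw [Real.sqrt_mul (by positivity), Real.sqrt_sq hc0]

lemma aux_norm_one_le {N : ℕ} : ‖(1 : Matrix (Fin N) (Fin N) ℂ)‖ ≤ 1 := by
  have h := aux_norm_diagonal_le (N := N) (fun _ => (1:ℂ)) zero_le_one (by simp)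
  simpa using h

set_option maxHeartbeats 2000000
/-- First order convergence of the semi-implicit scheme
`Φ^{k+1} = (I + iτD)⁻¹(I - iτ(V₁+V₂))Φᵏ` towards `Φ(t_k) = e^{-i t_k H}Φ⁰`,
where `H = D + V₁ + V₂`, `D` real diagonal and `V₁, V₂` Hermitian. -/
theorem semiImplicit_convergence {N : ℕ}
    (D : Matrix (Fin N) (Fin N) ℝ) (hD : D.IsDiag)
    (V₁ V₂ : Matrix (Fin N) (Fin N) ℂ) (h₁ : V₁.IsHermitian) (h₂ : V₂.IsHermitian)
    (Φ0 : EuclideanSpace ℂ (Fin N)) (T : ℝ) (hT : 0 < T) :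
    ∃ τ₀ : ℝ, 0 < τ₀ ∧ ∃ C : ℝ, 0 < C ∧
      ∀ τ : ℝ, 0 < τ → τ < τ₀ → ∀ k : ℕ, (k : ℝ) * τ ≤ T →
        ‖(EuclideanSpace.equiv (Fin N) ℂ).symm
            ((NormedSpace.exp ((-(Complex.I * (((k : ℝ) * τ : ℝ) : ℂ))) •
                (D.map Complex.ofReal + V₁ + V₂)) *ᵥ Φ0) -
              ((((1 + (Complex.I * (τ : ℂ)) • D.map Complex.ofReal)⁻¹ *
                  (1 - (Complex.I * (τ : ℂ)) • (V₁ + V₂))) ^ k) *ᵥ Φ0))‖ ≤ C * τ := by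
  classical
  set Dc : Matrix (Fin N) (Fin N) ℂ := D.map Complex.ofReal with hDc
  set V : Matrix (Fin N) (Fin N) ℂ := V₁ + V₂ with hV
  set Hm : Matrix (Fin N) (Fin N) ℂ := Dc + V₁ + V₂ with hHm
  have hHm' : Hm = Dc + V := by rw [hHm, hV, add_assoc]
  set K : ℝ := ‖Hm‖ ^ 2 * Real.exp ‖Hm‖ + ‖Dc‖ * ‖Hm‖ with hK
  have hK0 : 0 ≤ K := by rw [hK]; positivity
  set E : ℝ := Real.exp (T * (‖Hm‖ + ‖V‖ + 1)) with hE
  have hE0 : 0 ≤ E := by rw [hE]; positivity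
  set C : ℝ := T * E * K * ‖Φ0‖ + 1 with hC
  have hC0 : 0 < C := by
    have : 0 ≤ T * E * K * ‖Φ0‖ := by
      apply mul_nonneg (mul_nonneg (mul_nonneg hT.le hE0) hK0) (norm_nonneg _)
    rw [hC]; linarith
  refine ⟨1, one_pos, C, hC0, ?_⟩
  intro τ hτ hτ1 k hk
  have h1 : ‖(1 : Matrix (Fin N) (Fin N) ℂ)‖ ≤ 1 := aux_norm_one_le
  -- scalar norms
  have hsc2 : ‖Complex.I * (τ : ℂ)‖ = τ := by
    rw [norm_mul, Complex.norm_I, one_mul, Complex.norm_real, Real.norm_eq_abs,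
      abs_of_nonneg hτ.le]
  have hsc : ‖(-(Complex.I * (τ : ℂ)))‖ = τ := by rw [norm_neg, hsc2]
  -- the pieces
  set X : Matrix (Fin N) (Fin N) ℂ := (-(Complex.I * (τ : ℂ))) • Hm with hX
  set Am : Matrix (Fin N) (Fin N) ℂ := NormedSpace.exp X with hAm
  set P : Matrix (Fin N) (Fin N) ℂ := 1 + (Complex.I * (τ : ℂ)) • Dc with hP
  set Q : Matrix (Fin N) (Fin N) ℂ := 1 - (Complex.I * (τ : ℂ)) • V with hQ
  set B : Matrix (Fin N) (Fin N) ℂ := P⁻¹ * Q with hB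
  have hXnorm : ‖X‖ = τ * ‖Hm‖ := by rw [hX, norm_smul, hsc]
  -- exp at time t_k is Am ^ k
  have hexpk : NormedSpace.exp ((-(Complex.I * (((k : ℝ) * τ : ℝ) : ℂ))) • Hm) = Am ^ k := by
    rw [hAm, ← Matrix.exp_nsmul]
    congr 1
    rw [hX, ← Nat.cast_smul_eq_nsmul ℂ, smul_smul]
    congr 1
    push_cast
    ring
  -- diagonal structure of P
  set w : Fin N → ℂ := fun i => 1 + Complex.I * (τ : ℂ) * (D i i : ℂ) with hw
  have hwre : ∀ i, (w i).re = 1 := by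
    intro i
    simp [hw, Complex.add_re, Complex.mul_re]
  have hw0 : ∀ i, w i ≠ 0 := by
    intro i hcon
    have h := hwre i
    rw [hcon] at h
    simp at h
  have hPdiag : P = Matrix.diagonal w := by
    ext i j
    by_cases hij : i = j
    · subst hij
      simp [hP, hw, hDc, Matrix.add_apply, Matrix.smul_apply, Matrix.one_apply_eq,
        Matrix.map_apply, Matrix.diagonal_apply_eq, smul_eq_mul, mul_assoc]
    · simp [hP, Matrix.add_apply, Matrix.smul_apply, Matrix.one_apply_ne hij,
        Matrix.diagonal_apply_ne _ hij, hDc, Matrix.map_apply, hD hij]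
  have hPinv : P⁻¹ = Matrix.diagonal (fun i => (w i)⁻¹) := by
    apply Matrix.inv_eq_right_inv
    rw [hPdiag, Matrix.diagonal_mul_diagonal]
    have : (fun i => w i * (w i)⁻¹) = fun _ => (1 : ℂ) := by
      funext i; exact mul_inv_cancel₀ (hw0 i)
    rw [this, Matrix.diagonal_one]
  have hleft : P⁻¹ * P = 1 := by
    rw [hPinv, hPdiag, Matrix.diagonal_mul_diagonal]
    have : (fun i => (w i)⁻¹ * w i) = fun _ => (1 : ℂ) := by
      funext i; exact inv_mul_cancel₀ (hw0 i)
    rw [this, Matrix.diagonal_one]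
  have hPinv_norm : ‖P⁻¹‖ ≤ 1 := by
    rw [hPinv]
    apply aux_norm_diagonal_le _ zero_le_one
    intro i
    rw [norm_inv]
    have h1w : 1 ≤ ‖w i‖ := by
      calc (1:ℝ) = |(w i).re| := by rw [hwre i]; norm_num
      _ ≤ ‖w i‖ := Complex.abs_re_le_norm _
      _ = ‖w i‖ := rfl
    exact inv_le_one_of_one_le₀ h1w
  -- stability bounds
  set M : ℝ := Real.exp (τ * (‖Hm‖ + ‖V‖ + 1)) with hM
  have hM1 : 1 ≤ M := by rw [hM]; exact Real.one_le_exp (by positivity)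
  have hM0 : 0 ≤ M := le_trans zero_le_one hM1
  have hA_le_M : ‖Am‖ ≤ M := by
    have h := aux_norm_exp_le h1 X
    rw [← hAm, hXnorm] at h
    refine h.trans ?_
    rw [hM]
    apply Real.exp_le_exp.mpr
    nlinarith [norm_nonneg V, hτ.le]
  have hB_le_M : ‖B‖ ≤ M := by
    calc ‖B‖ ≤ ‖P⁻¹‖ * ‖Q‖ := by rw [hB]; exact norm_mul_le _ _
    _ ≤ 1 * (1 + τ * ‖V‖) := by
        apply mul_le_mul hPinv_norm _ (norm_nonneg _) zero_le_one
        rw [hQ]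
        refine (norm_sub_le _ _).trans ?_
        rw [norm_smul, hsc2]
        linarith [h1]
    _ = 1 + τ * ‖V‖ := one_mul _
    _ ≤ Real.exp (τ * ‖V‖) := by linarith [Real.add_one_le_exp (τ * ‖V‖)]
    _ ≤ M := by
        rw [hM]
        apply Real.exp_le_exp.mpr
        nlinarith [norm_nonneg Hm, hτ.le]
  -- consistency
  have hkey : P * (1 + X) - Q = (Complex.I * (τ : ℂ)) • (Dc * X) := by
    have hXeq : X = -((Complex.I * (τ : ℂ)) • (Dc + V)) := by
      rw [hX, hHm', neg_smul]
    rw [hP, hQ, add_mul, one_mul, mul_add, mul_one, smul_mul_assoc, hXeq]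
    module
  have hcons1 : 1 + X - B = P⁻¹ * ((Complex.I * (τ : ℂ)) • (Dc * X)) := by
    rw [← hkey, mul_sub, ← mul_assoc, hleft, one_mul, hB]
  have hAB : ‖Am - B‖ ≤ τ ^ 2 * K := by
    have hsplit : Am - B = (Am - 1 - X) + (1 + X - B) := by abel
    have hr1 : ‖Am - 1 - X‖ ≤ τ ^ 2 * (‖Hm‖ ^ 2 * Real.exp ‖Hm‖) := by
      have h := aux_exp_remainder h1 X
      rw [← hAm, hXnorm] at h
      refine h.trans ?_
      have hexp : Real.exp (τ * ‖Hm‖) ≤ Real.exp ‖Hm‖ := by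
        apply Real.exp_le_exp.mpr
        nlinarith [norm_nonneg Hm, hτ.le, hτ1.le]
      have hsq : (τ * ‖Hm‖) ^ 2 = τ ^ 2 * ‖Hm‖ ^ 2 := by ring
      rw [hsq, mul_assoc]
      apply mul_le_mul_of_nonneg_left _ (by positivity)
      exact mul_le_mul_of_nonneg_left hexp (by positivity)
    have hr2 : ‖1 + X - B‖ ≤ τ ^ 2 * (‖Dc‖ * ‖Hm‖) := by
      rw [hcons1]
      calc ‖P⁻¹ * ((Complex.I * (τ : ℂ)) • (Dc * X))‖
          ≤ ‖P⁻¹‖ * ‖(Complex.I * (τ : ℂ)) • (Dc * X)‖ := norm_mul_le _ _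
      _ ≤ 1 * (τ * ‖Dc * X‖) := by
          rw [norm_smul, hsc2]
          exact mul_le_mul_of_nonneg_right hPinv_norm (by positivity)
      _ ≤ τ * (‖Dc‖ * ‖X‖) := by
          rw [one_mul]
          exact mul_le_mul_of_nonneg_left (norm_mul_le _ _) hτ.le
      _ = τ ^ 2 * (‖Dc‖ * ‖Hm‖) := by rw [hXnorm]; ring
    calc ‖Am - B‖ ≤ ‖Am - 1 - X‖ + ‖1 + X - B‖ := by
          rw [hsplit]; exact norm_add_le _ _
    _ ≤ τ ^ 2 * (‖Hm‖ ^ 2 * Real.exp ‖Hm‖) + τ ^ 2 * (‖Dc‖ * ‖Hm‖) := add_le_add hr1 hr2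
    _ = τ ^ 2 * K := by rw [hK]; ring
  -- global error
  have hpow := aux_pow_sub_pow h1 hM1 hA_le_M hB_le_M k
  have hMkE : M ^ k ≤ E := by
    rw [hM, hE, ← Real.exp_nat_mul]
    apply Real.exp_le_exp.mpr
    have e : (k : ℝ) * (τ * (‖Hm‖ + ‖V‖ + 1)) = ((k : ℝ) * τ) * (‖Hm‖ + ‖V‖ + 1) := by ring
    rw [e]
    exact mul_le_mul_of_nonneg_right hk (by positivity)
  rw [hexpk]
  have h5 : (EuclideanSpace.equiv (Fin N) ℂ).symm (Am ^ k *ᵥ Φ0 - B ^ k *ᵥ Φ0) =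
      (EuclideanSpace.equiv (Fin N) ℂ).symm ((Am ^ k - B ^ k) *ᵥ Φ0) := by
    rw [Matrix.sub_mulVec]
  rw [h5]
  calc ‖(EuclideanSpace.equiv (Fin N) ℂ).symm ((Am ^ k - B ^ k) *ᵥ Φ0)‖
      ≤ ‖Am ^ k - B ^ k‖ * ‖Φ0‖ := Matrix.l2_opNorm_mulVec _ _
  _ ≤ ((k : ℝ) * M ^ k * (τ ^ 2 * K)) * ‖Φ0‖ := by
      apply mul_le_mul_of_nonneg_right _ (norm_nonneg _)
      refine hpow.trans ?_
      apply mul_le_mul_of_nonneg_left hAB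
      exact mul_nonneg (Nat.cast_nonneg k) (pow_nonneg hM0 k)
  _ = ((k : ℝ) * τ * M ^ k) * (τ * K * ‖Φ0‖) := by ring
  _ ≤ (T * E) * (τ * K * ‖Φ0‖) := by
      apply mul_le_mul_of_nonneg_right _ (by positivity)
      exact mul_le_mul hk hMkE (pow_nonneg hM0 k) hT.le
  _ = (T * E * K * ‖Φ0‖) * τ := by ring
  _ ≤ C * τ := by
      apply mul_le_mul_of_nonneg_right _ hτ.le
      rw [hC]; linarith
end
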